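/- arXiv:2204.07155 — 2 statements merged into one kernel-verified Lean document; each statement's English description precedes it below -/
import Mathlib

section
/- Let P = {(x,y)} be a finite collection of vectors with x ∈ ℂ^{d₁}, y ∈ ℂ^{d₂}, such that ∑_{(x,y)∈P} (x,y)(x,y)† = I_{d₁+d₂}. Let A be a d₁×d₁ positive definite diagonal matrix with smallest eigenvalue a > 0 and B a d₂×d₂ positive definite diagonal matrix with smallest eigenvalue b > 0. Then for any coefficients c_{x,y} ∈ [−1,1], ‖∑_{(x,y)∈P} c_{x,y}·x·‖x‖·‖y‖² / (x†Ax + y†By)‖ ≤ √(d₁)/b. -/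
open Matrix

/-- The quadratic form `∑ j, A j * ‖v j‖²` of a positive diagonal matrix with diagonal
entries `A` at the vector `v`. -/
noncomputable def quadForm {d : ℕ} (A : Fin d → ℝ) (v : Fin d → ℂ) : ℝ :=
  ∑ j, A j * ‖v j‖ ^ 2

set_option maxHeartbeats 1000000 in
/-- Let `{(x i, y i)}` with `x i ∈ ℂ^{d₁}`, `y i ∈ ℂ^{d₂}` be a finite
collection whose concatenations form a resolution of the identity on `ℂ^{d₁+d₂}`. Let `A`,
`B` be positive definite diagonal matrices with smallest eigenvalues `a, b > 0`. Then for
any coefficients `c i ∈ [-1, 1]`,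
`‖∑ i, c i • (x i) ‖x i‖ ‖y i‖² / ((x i)†A(x i) + (y i)†B(y i))‖ ≤ √d₁ / b`. -/
theorem stmt7 {d₁ d₂ : ℕ} {ι : Type*} [Fintype ι]
    (x : ι → Fin d₁ → ℂ) (y : ι → Fin d₂ → ℂ)
    (hres : ∑ i, Matrix.vecMulVec (Sum.elim (x i) (y i)) (star (Sum.elim (x i) (y i)))
      = (1 : Matrix (Fin d₁ ⊕ Fin d₂) (Fin d₁ ⊕ Fin d₂) ℂ))
    (A : Fin d₁ → ℝ) (B : Fin d₂ → ℝ) (a b : ℝ) (ha : 0 < a) (hb : 0 < b)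
    (hA : ∀ j, a ≤ A j) (hB : ∀ k, b ≤ B k)
    (c : ι → ℝ) (hc : ∀ i, |c i| ≤ 1) :
    Real.sqrt (∑ j, ‖∑ i,
        (c i * Real.sqrt (∑ j', ‖x i j'‖ ^ 2) * (∑ k, ‖y i k‖ ^ 2)
          / (quadForm A (x i) + quadForm B (y i))) • x i j‖ ^ 2)
      ≤ Real.sqrt d₁ / b := by
  classical
  set w : ι → ℝ := fun i => c i * Real.sqrt (∑ j', ‖x i j'‖ ^ 2) * (∑ k, ‖y i k‖ ^ 2)
      / (quadForm A (x i) + quadForm B (y i)) with hw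
  have key : ∀ j k : Fin d₁, ∑ i, x i j * (starRingEnd ℂ) (x i k) = if j = k then 1 else 0 := by
    intro j k
    have h := congrFun (congrFun hres (Sum.inl j)) (Sum.inl k)
    simpa [Matrix.sum_apply, Matrix.vecMulVec_apply, Matrix.one_apply, Sum.inl.injEq] using h
  have keydiag : ∀ j : Fin d₁, ∑ i, ‖x i j‖ ^ 2 = 1 := by
    intro j
    have h := key j j
    rw [if_pos rfl] at h
    have : ((∑ i, ‖x i j‖ ^ 2 : ℝ) : ℂ) = ((1 : ℝ) : ℂ) := by
      push_cast
      rw [← h]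
      refine Finset.sum_congr rfl fun i _ => ?_
      rw [Complex.mul_conj, Complex.normSq_eq_norm_sq]
      push_cast; ring
    exact_mod_cast this
  have sumx : ∑ i, ∑ j, ‖x i j‖ ^ 2 = (d₁ : ℝ) := by
    rw [Finset.sum_comm, Finset.sum_congr rfl fun j _ => keydiag j]
    simp
  -- bound on coefficients
  have hwb : ∀ i, w i ^ 2 ≤ (∑ j', ‖x i j'‖ ^ 2) / b ^ 2 := by
    intro i
    have hs : (0:ℝ) ≤ ∑ j', ‖x i j'‖ ^ 2 := Finset.sum_nonneg fun _ _ => sq_nonneg _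
    have ht : (0:ℝ) ≤ ∑ k, ‖y i k‖ ^ 2 := Finset.sum_nonneg fun _ _ => sq_nonneg _
    have hQA : (0:ℝ) ≤ quadForm A (x i) :=
      Finset.sum_nonneg fun j _ => mul_nonneg (le_trans ha.le (hA j)) (sq_nonneg _)
    have hQB : b * (∑ k, ‖y i k‖ ^ 2) ≤ quadForm B (y i) := by
      rw [Finset.mul_sum]
      exact Finset.sum_le_sum fun k _ => mul_le_mul_of_nonneg_right (hB k) (sq_nonneg _)
    have h1 : 0 ≤ Real.sqrt (∑ j', ‖x i j'‖ ^ 2) := Real.sqrt_nonneg _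
    have habs : |w i| ≤ Real.sqrt (∑ j', ‖x i j'‖ ^ 2) / b := by
      rcases eq_or_lt_of_le ht with h0 | h0
      · have hz : w i = 0 := by
          simp only [hw]
          rw [← h0, mul_zero, zero_div]
        rw [hz, abs_zero]
        positivity
      · have hQ : 0 < quadForm A (x i) + quadForm B (y i) := by nlinarith
        rw [hw, abs_div, abs_of_pos hQ, abs_mul, abs_mul,
          abs_of_nonneg (Real.sqrt_nonneg _), abs_of_pos h0, div_le_div_iff₀ hQ hb]
        calc |c i| * Real.sqrt (∑ j', ‖x i j'‖ ^ 2) * (∑ k, ‖y i k‖ ^ 2) * b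
            ≤ 1 * Real.sqrt (∑ j', ‖x i j'‖ ^ 2) * (∑ k, ‖y i k‖ ^ 2) * b :=
              mul_le_mul_of_nonneg_right (mul_le_mul_of_nonneg_right
                (mul_le_mul_of_nonneg_right (hc i) h1) h0.le) hb.le
          _ = Real.sqrt (∑ j', ‖x i j'‖ ^ 2) * (b * (∑ k, ‖y i k‖ ^ 2)) := by ring
          _ ≤ Real.sqrt (∑ j', ‖x i j'‖ ^ 2) * (quadForm A (x i) + quadForm B (y i)) :=
              mul_le_mul_of_nonneg_left (by linarith) h1
    calc w i ^ 2 = |w i| ^ 2 := (sq_abs _).symm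
      _ ≤ (Real.sqrt (∑ j', ‖x i j'‖ ^ 2) / b) ^ 2 := by
          apply pow_le_pow_left₀ (abs_nonneg _) habs
      _ = (∑ j', ‖x i j'‖ ^ 2) / b ^ 2 := by
          rw [div_pow, Real.sq_sqrt hs]
  have hsumw : ∑ i, w i ^ 2 ≤ (d₁ : ℝ) / b ^ 2 := by
    calc ∑ i, w i ^ 2 ≤ ∑ i, (∑ j', ‖x i j'‖ ^ 2) / b ^ 2 := Finset.sum_le_sum fun i _ => hwb i
      _ = (d₁ : ℝ) / b ^ 2 := by rw [← Finset.sum_div, sumx]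
  -- the vector v in Euclidean space
  set X : ι → EuclideanSpace ℂ (Fin d₁) := fun i => WithLp.toLp 2 (x i) with hX
  set v : EuclideanSpace ℂ (Fin d₁) := ∑ i, (w i : ℂ) • X i with hv
  have hvj : ∀ j, v j = ∑ i, (w i) • x i j := by
    intro j
    rw [hv]
    rw [show ((∑ i, (w i : ℂ) • X i : EuclideanSpace ℂ (Fin d₁)) j)
        = ∑ i, ((w i : ℂ) • X i) j from by rw [WithLp.ofLp_sum]; exact Finset.sum_apply j Finset.univ _]
    refine Finset.sum_congr rfl fun i _ => ?_
    show (w i : ℂ) * x i j = (w i) • x i j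
    rw [Complex.real_smul]
  have hgoal_eq : Real.sqrt (∑ j, ‖∑ i, (w i) • x i j‖ ^ 2) = ‖v‖ := by
    rw [EuclideanSpace.norm_eq]
    congr 1
    exact Finset.sum_congr rfl fun j _ => by rw [hvj j]
  set N : ℝ := ∑ j, ‖v j‖ ^ 2 with hN
  have hNnn : 0 ≤ N := Finset.sum_nonneg fun _ _ => sq_nonneg _
  have hnormv : ‖v‖ ^ 2 = N := by
    rw [EuclideanSpace.norm_eq, Real.sq_sqrt hNnn]
  have hvv : (inner ℂ v v : ℂ) = ((N : ℝ) : ℂ) := by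
    rw [PiLp.inner_apply, hN]
    push_cast
    refine Finset.sum_congr rfl fun j _ => ?_
    rw [RCLike.inner_apply']
    show (starRingEnd ℂ) (v j) * v j = _
    rw [mul_comm, Complex.mul_conj, Complex.normSq_eq_norm_sq]
    push_cast; ring
  have hinner : ∀ i, (inner ℂ v (X i) : ℂ) = ∑ j, (starRingEnd ℂ) (v j) * x i j := by
    intro i
    rw [PiLp.inner_apply]
    exact Finset.sum_congr rfl fun j _ => RCLike.inner_apply' _ _
  -- key2 : ∑ i ‖⟪v, X i⟫‖² = N
  have key2 : ∑ i, ‖(inner ℂ v (X i) : ℂ)‖ ^ 2 = N := by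
    have hC : ∑ i, (inner ℂ v (X i) : ℂ) * (starRingEnd ℂ) (inner ℂ v (X i) : ℂ)
        = ((N : ℝ) : ℂ) := by
      calc ∑ i, (inner ℂ v (X i) : ℂ) * (starRingEnd ℂ) (inner ℂ v (X i) : ℂ)
          = ∑ i, ∑ j, ∑ k, ((starRingEnd ℂ) (v j) * x i j) * (v k * (starRingEnd ℂ) (x i k)) := by
            refine Finset.sum_congr rfl fun i _ => ?_
            rw [hinner i, map_sum, Finset.sum_mul_sum]
            refine Finset.sum_congr rfl fun j _ => Finset.sum_congr rfl fun k _ => ?_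
            rw [_root_.map_mul, Complex.conj_conj]
        _ = ∑ j, ∑ k, ((starRingEnd ℂ) (v j) * v k) * ∑ i, x i j * (starRingEnd ℂ) (x i k) := by
            rw [Finset.sum_comm]
            refine Finset.sum_congr rfl fun j _ => ?_
            rw [Finset.sum_comm]
            refine Finset.sum_congr rfl fun k _ => ?_
            rw [Finset.mul_sum]
            exact Finset.sum_congr rfl fun i _ => by ring
        _ = ∑ j, (starRingEnd ℂ) (v j) * v j := by
            refine Finset.sum_congr rfl fun j _ => ?_
            rw [Finset.sum_eq_single j]
            · rw [key j j, if_pos rfl, mul_one]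
            · intro k _ hk
              rw [key j k, if_neg (Ne.symm hk), mul_zero]
            · intro h; exact absurd (Finset.mem_univ j) h
        _ = ((N : ℝ) : ℂ) := by
            rw [← hvv, PiLp.inner_apply]
            exact Finset.sum_congr rfl fun j _ => (RCLike.inner_apply' _ _).symm
    have hre := congrArg Complex.re hC
    rw [Complex.re_sum, Complex.ofReal_re] at hre
    calc ∑ i, ‖(inner ℂ v (X i) : ℂ)‖ ^ 2
        = ∑ i, ((inner ℂ v (X i) : ℂ) * (starRingEnd ℂ) (inner ℂ v (X i) : ℂ)).re := by
          refine Finset.sum_congr rfl fun i _ => ?_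
          rw [Complex.mul_conj, Complex.normSq_eq_norm_sq,
            Complex.ofReal_re]
      _ = N := hre
  -- main chain
  have hmain : N ≤ Real.sqrt (∑ i, w i ^ 2) * ‖v‖ := by
    have h1 : N = ∑ i, w i * (inner ℂ v (X i) : ℂ).re := by
      have hexp : (inner ℂ v v : ℂ) = ∑ i, (w i : ℂ) * (inner ℂ v (X i) : ℂ) := by
        rw [hv, inner_sum]
        exact Finset.sum_congr rfl fun i _ => inner_smul_right _ _ _
      have h2 := congrArg Complex.re (hvv.symm.trans hexp)
      rw [Complex.ofReal_re, Complex.re_sum] at h2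
      rw [h2]
      exact Finset.sum_congr rfl fun i _ => Complex.re_ofReal_mul _ _
    rw [h1]
    calc ∑ i, w i * (inner ℂ v (X i) : ℂ).re
        ≤ ∑ i, |w i| * ‖(inner ℂ v (X i) : ℂ)‖ := by
          refine Finset.sum_le_sum fun i _ => ?_
          calc w i * (inner ℂ v (X i) : ℂ).re ≤ |w i * (inner ℂ v (X i) : ℂ).re| := le_abs_self _
            _ = |w i| * |(inner ℂ v (X i) : ℂ).re| := abs_mul _ _
            _ ≤ |w i| * ‖(inner ℂ v (X i) : ℂ)‖ :=
                mul_le_mul_of_nonneg_left (Complex.abs_re_le_norm _) (abs_nonneg _)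
      _ ≤ Real.sqrt (∑ i, w i ^ 2) * ‖v‖ := by
          have hCS := Finset.sum_mul_sq_le_sq_mul_sq Finset.univ
            (fun i => |w i|) (fun i => ‖(inner ℂ v (X i) : ℂ)‖)
          simp only [sq_abs] at hCS
          rw [key2, ← hnormv] at hCS
          have hnn : (0:ℝ) ≤ ∑ i, |w i| * ‖(inner ℂ v (X i) : ℂ)‖ :=
            Finset.sum_nonneg fun i _ => mul_nonneg (abs_nonneg _) (norm_nonneg _)
          have hsq := Real.sqrt_le_sqrt hCS
          rw [Real.sqrt_sq hnn, Real.sqrt_mul (Finset.sum_nonneg fun i _ => sq_nonneg _),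
            Real.sqrt_sq (norm_nonneg _)] at hsq
          exact hsq
  rw [hgoal_eq]
  have hvle : ‖v‖ ≤ Real.sqrt (∑ i, w i ^ 2) := by
    rcases eq_or_lt_of_le (norm_nonneg v) with h0 | h0
    · rw [← h0]; exact Real.sqrt_nonneg _
    · have h3 : ‖v‖ * ‖v‖ ≤ Real.sqrt (∑ i, w i ^ 2) * ‖v‖ := by
        rw [← sq, hnormv]; exact hmain
      exact le_of_mul_le_mul_right h3 h0
  calc ‖v‖ ≤ Real.sqrt (∑ i, w i ^ 2) := hvle
    _ ≤ Real.sqrt ((d₁ : ℝ) / b ^ 2) := Real.sqrt_le_sqrt hsumw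
    _ = Real.sqrt d₁ / b := by
        rw [Real.sqrt_div (Nat.cast_nonneg _), Real.sqrt_sq hb.le]
end

section
/- For any POVM resolution {(x,y)} of I_{d₁+d₂} as above, and any unit vector (x_t, y_t) with x_t ∈ ℂ^{d₁}, y_t ∈ ℂ^{d₂}, and any d₁×d₂ matrix H: if the pair (x_t,y_t) is drawn with probability ω = x_t†Ax_t + y_t†By_t (the null-hypothesis outcome probability), then E[(x_t†Hy_t)²/(x_t†Ax_t + y_t†By_t)²] ≤ ‖H‖_F²/b, where b is the smallest eigenvalue of B. -/
open Matrix

/-- For a rank-1 POVM resolution `{(x i, y i)}` of `I_{d₁+d₂}`, measuring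
the block-diagonal state `diag(A,B)` yields outcome `i` with probability
`ω i = (x i)†A(x i) + (y i)†B(y i)`; for any `d₁ × d₂` matrix `H`,
`E[ ‖x† H y‖² / (x†Ax + y†By)² ] ≤ ‖H‖_F² / b`, where `b` is the smallest eigenvalue
of `B`. -/
theorem stmt8 {d₁ d₂ : ℕ} {ι : Type*} [Fintype ι]
    (x : ι → Fin d₁ → ℂ) (y : ι → Fin d₂ → ℂ)
    (hres : ∑ i, Matrix.vecMulVec (Sum.elim (x i) (y i)) (star (Sum.elim (x i) (y i)))
      = (1 : Matrix (Fin d₁ ⊕ Fin d₂) (Fin d₁ ⊕ Fin d₂) ℂ))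
    (A : Fin d₁ → ℝ) (B : Fin d₂ → ℝ) (a b : ℝ) (ha : 0 < a) (hb : 0 < b)
    (hA : ∀ j, a ≤ A j) (hB : ∀ k, b ≤ B k)
    (H : Matrix (Fin d₁) (Fin d₂) ℂ) :
    ∑ i, (quadForm A (x i) + quadForm B (y i)) *
        (‖star (x i) ⬝ᵥ H.mulVec (y i)‖ ^ 2
          / (quadForm A (x i) + quadForm B (y i)) ^ 2)
      ≤ (∑ j, ∑ k, ‖H j k‖ ^ 2) / b := by
  classical
  set w : ι → Fin d₂ → ℂ := fun i => Matrix.vecMul (star (x i)) H with hw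
  set W : ι → ℝ := fun i => ∑ k, ‖w i k‖ ^ 2 with hW
  set Y : ι → ℝ := fun i => ∑ k, ‖y i k‖ ^ 2 with hY
  set ω : ι → ℝ := fun i => quadForm A (x i) + quadForm B (y i) with hω
  have hWnn : ∀ i, 0 ≤ W i := fun i => Finset.sum_nonneg fun k _ => by positivity
  have hYnn : ∀ i, 0 ≤ Y i := fun i => Finset.sum_nonneg fun k _ => by positivity
  have hqAnn : ∀ i, 0 ≤ quadForm A (x i) := fun i =>
    Finset.sum_nonneg fun j _ => mul_nonneg (le_trans ha.le (hA j)) (by positivity)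
  have hωY : ∀ i, b * Y i ≤ ω i := by
    intro i
    have h1 : b * Y i ≤ quadForm B (y i) := by
      rw [hY, Finset.mul_sum]
      exact Finset.sum_le_sum fun k _ => mul_le_mul_of_nonneg_right (hB k) (by positivity)
    have := hqAnn i
    simp only [hω]; linarith
  have hωnn : ∀ i, 0 ≤ ω i := fun i => le_trans (mul_nonneg hb.le (hYnn i)) (hωY i)
  -- Cauchy-Schwarz per term
  have hCS : ∀ i, ‖star (x i) ⬝ᵥ H.mulVec (y i)‖ ^ 2 ≤ W i * Y i := by
    intro i
    have h0 : star (x i) ⬝ᵥ H.mulVec (y i) = ∑ k, w i k * y i k := by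
      rw [dotProduct_mulVec]; rfl
    calc ‖star (x i) ⬝ᵥ H.mulVec (y i)‖ ^ 2
        ≤ (∑ k, ‖w i k‖ * ‖y i k‖) ^ 2 := by
          rw [h0]
          exact pow_le_pow_left₀ (norm_nonneg _)
            ((norm_sum_le _ _).trans (le_of_eq (by simp [norm_mul]))) 2
      _ ≤ W i * Y i := Finset.sum_mul_sq_le_sq_mul_sq _ _ _
  -- per-term bound
  have hterm : ∀ i, ω i * (‖star (x i) ⬝ᵥ H.mulVec (y i)‖ ^ 2 / ω i ^ 2) ≤ W i / b := by
    intro i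
    rcases eq_or_lt_of_le (hωnn i) with h0 | hpos
    · rw [← h0]; simpa using div_nonneg (hWnn i) hb.le
    · have : ω i * (‖star (x i) ⬝ᵥ H.mulVec (y i)‖ ^ 2 / ω i ^ 2)
          = ‖star (x i) ⬝ᵥ H.mulVec (y i)‖ ^ 2 / ω i := by
        field_simp
      rw [this]
      rcases eq_or_lt_of_le (hYnn i) with hY0 | hYpos
      · have : ‖star (x i) ⬝ᵥ H.mulVec (y i)‖ ^ 2 = 0 := by
          have := hCS i; nlinarith [hWnn i]
        rw [this, zero_div]; exact div_nonneg (hWnn i) hb.le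
      · calc ‖star (x i) ⬝ᵥ H.mulVec (y i)‖ ^ 2 / ω i ≤ (W i * Y i) / (b * Y i) :=
            div_le_div₀ (mul_nonneg (hWnn i) (hYnn i)) (hCS i) (by positivity) (hωY i)
          _ = W i / b := by rw [mul_div_mul_right _ _ (ne_of_gt hYpos)]
  -- resolution identity consequence
  have hδ : ∀ j j' : Fin d₁, ∑ i, x i j * (starRingEnd ℂ) (x i j')
      = if j = j' then 1 else 0 := by
    intro j j'
    have := congrFun (congrFun hres (Sum.inl j)) (Sum.inl j')
    simpa [Matrix.sum_apply, Matrix.vecMulVec_apply, Matrix.one_apply] using this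
  -- sum of W equals Frobenius norm squared
  have hWsum : ∑ i, W i = ∑ j, ∑ k, ‖H j k‖ ^ 2 := by
    have keyC : ∀ k, (∑ i, (starRingEnd ℂ) (w i k) * w i k)
        = ∑ j, (starRingEnd ℂ) (H j k) * H j k := by
      intro k
      have expand : ∀ i, w i k = ∑ j, (starRingEnd ℂ) (x i j) * H j k := by
        intro i; simp [hw, Matrix.vecMul, dotProduct]
      calc (∑ i, (starRingEnd ℂ) (w i k) * w i k)
          = ∑ i, ∑ j, ∑ j', ((starRingEnd ℂ) (H j k) * H j' k)
              * (x i j * (starRingEnd ℂ) (x i j')) := by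
            refine Finset.sum_congr rfl fun i _ => ?_
            rw [expand, map_sum, Finset.sum_mul_sum]
            refine Finset.sum_congr rfl fun j _ => Finset.sum_congr rfl fun j' _ => ?_
            simp only [_root_.map_mul, Complex.conj_conj]
            ring
        _ = ∑ j, ∑ j', ((starRingEnd ℂ) (H j k) * H j' k)
              * ∑ i, (x i j * (starRingEnd ℂ) (x i j')) := by
            rw [Finset.sum_comm]
            refine Finset.sum_congr rfl fun j _ => ?_
            rw [Finset.sum_comm]
            refine Finset.sum_congr rfl fun j' _ => ?_
            rw [Finset.mul_sum]
        _ = ∑ j, (starRingEnd ℂ) (H j k) * H j k := by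
            refine Finset.sum_congr rfl fun j _ => ?_
            rw [Finset.sum_eq_single j]
            · rw [hδ, if_pos rfl, mul_one]
            · intro j' _ hne; rw [hδ, if_neg (Ne.symm hne), mul_zero]
            · intro h; exact absurd (Finset.mem_univ j) h
    have hre : ∀ z : ℂ, ((starRingEnd ℂ) z * z).re = ‖z‖ ^ 2 := by
      intro z
      rw [← Complex.normSq_eq_conj_mul_self, Complex.ofReal_re, Complex.normSq_eq_norm_sq]
    calc ∑ i, W i = ∑ k, ∑ i, ‖w i k‖ ^ 2 := Finset.sum_comm
      _ = ∑ k, (∑ i, (starRingEnd ℂ) (w i k) * w i k).re := by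
          refine Finset.sum_congr rfl fun k _ => ?_
          rw [Complex.re_sum]
          exact Finset.sum_congr rfl fun i _ => (hre _).symm
      _ = ∑ k, ∑ j, ‖H j k‖ ^ 2 := by
          refine Finset.sum_congr rfl fun k _ => ?_
          rw [keyC, Complex.re_sum]
          exact Finset.sum_congr rfl fun j _ => hre _
      _ = ∑ j, ∑ k, ‖H j k‖ ^ 2 := Finset.sum_comm
  calc ∑ i, ω i * (‖star (x i) ⬝ᵥ H.mulVec (y i)‖ ^ 2 / ω i ^ 2)
      ≤ ∑ i, W i / b := Finset.sum_le_sum fun i _ => hterm i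
    _ = (∑ j, ∑ k, ‖H j k‖ ^ 2) / b := by rw [← Finset.sum_div, hWsum]
end
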